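/- Let γ be an orthogonal linear map of a finite-dimensional real inner product space V such that γ has no nonzero fixed vector (i.e. 1 is not an eigenvalue of γ). Then det(1 − γ) > 0. -/

import Mathlib

theorem stmt_0 {V : Type*} [NormedAddCommGroup V] [InnerProductSpace ℝ V]
    [FiniteDimensional ℝ V] (γ : V →ₗᵢ[ℝ] V)
    (hfix : ∀ v : V, γ v = v → v = 0) :
    0 < LinearMap.det ((LinearMap.id : V →ₗ[ℝ] V) - γ.toLinearMap) := by
  -- Consider the path t ↦ det (id - t • γ) on [0,1].
  set γc : V →L[ℝ] V := LinearMap.toContinuousLinearMap γ.toLinearMap with hγc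
  set f : ℝ → ℝ := fun t => ((ContinuousLinearMap.id ℝ V) - t • γc).det with hf
  have hcont : Continuous f := by
    apply ContinuousLinearMap.continuous_det.comp
    exact continuous_const.sub (continuous_id.smul continuous_const)
  -- f never vanishes on [0,1]
  have hne : ∀ t ∈ Set.Icc (0:ℝ) 1, f t ≠ 0 := by
    intro t ht h0
    have hker := LinearMap.bot_lt_ker_of_det_eq_zero h0
    obtain ⟨v, hv, hv0⟩ := SetLike.exists_of_lt hker
    simp only [LinearMap.mem_ker] at hv
    have hv' : v - t • γ v = 0 := by
      simp at hv
      exact hv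
    have hveq : v = t • γ v := by
      have := sub_eq_zero.mp hv'
      exact this
    have hnorm : ‖v‖ = t * ‖v‖ := by
      calc ‖v‖ = ‖t • γ v‖ := by rw [← hveq]
        _ = |t| * ‖γ v‖ := by rw [norm_smul, Real.norm_eq_abs]
        _ = t * ‖v‖ := by rw [abs_of_nonneg ht.1, γ.norm_map]
    have hv0' : v ≠ 0 := by simpa using hv0
    have hvpos : 0 < ‖v‖ := norm_pos_iff.mpr hv0'
    have ht1 : t = 1 := by
      have := mul_right_cancel₀ (ne_of_gt hvpos) (by linarith [hnorm] : t * ‖v‖ = 1 * ‖v‖)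
      exact this
    rw [ht1, one_smul] at hveq
    exact hv0' (hfix v hveq.symm)
  have hf0 : f 0 = 1 := by
    simp [hf, ContinuousLinearMap.det]
  -- By IVT, f 1 > 0
  have h1 : 0 < f 1 := by
    by_contra h
    push_neg at h
    have hlt : f 1 < 0 := lt_of_le_of_ne h (hne 1 ⟨zero_le_one, le_refl 1⟩)
    have : (0:ℝ) ∈ Set.Icc (f 1) (f 0) := ⟨le_of_lt hlt, by rw [hf0]; exact zero_le_one⟩
    obtain ⟨t, ht, htf⟩ := intermediate_value_Icc' zero_le_one hcont.continuousOn this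
    exact hne t ht htf
  have : f 1 = LinearMap.det ((LinearMap.id : V →ₗ[ℝ] V) - γ.toLinearMap) := by
    simp only [hf, ContinuousLinearMap.det, one_smul]
    congr 1
  rw [← this]
  exact h1
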